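/- Let L_1(x) = I_{H_1} + Σ_{j=1}^g A_j x_j and L_2(x) = I_{H_2} + Σ_{j=1}^g B_j x_j be monic linear operator pencils with bounded self-adjoint coefficients on separable real Hilbert spaces H_1, H_2. Let L̃_1 be the monic pencil on H_1 ⊕ ℝ with coefficients Ã_j = A_j ⊕ 0 (the operator acting as A_j on H_1 and as 0 on ℝ), i.e. L̃_1(x) = I_{H_1⊕ℝ} + Σ_{j=1}^g Ã_j x_j. Then for every n ∈ ℕ: D_{L_1}(n) ⊆ D_{L_2}(n) if and only if D_{ʰL̃_1}(n) ⊆ D_{ʰL_2}(n). -/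

import Mathlib

open scoped RealInnerProductSpace

noncomputable section

variable {E H K : Type*}

/-- A bounded operator on a real inner product space is symmetric (self-adjoint). -/
def OpIsSymm [NormedAddCommGroup E] [InnerProductSpace ℝ E] (T : E →L[ℝ] E) : Prop :=
  ∀ u v : E, ⟪T u, v⟫ = ⟪u, T v⟫

/-- A bounded operator on a real inner product space is positive semidefinite. -/
def OpIsPos [NormedAddCommGroup E] [InnerProductSpace ℝ E] (T : E →L[ℝ] E) : Prop :=
  OpIsSymm T ∧ ∀ v : E, 0 ≤ ⟪T v, v⟫

/-- A bounded operator is positive definite: `T - ε • id` is positive semidefinite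
for some `ε > 0`. -/
def OpIsPosDef [NormedAddCommGroup E] [InnerProductSpace ℝ E] (T : E →L[ℝ] E) : Prop :=
  ∃ ε : ℝ, 0 < ε ∧ OpIsPos (T - ε • ContinuousLinearMap.id ℝ E)

/-- The block operator on the Hilbert direct sum `H^n` whose `(i,k)` block is `c i k`. -/
def blockOp [NormedAddCommGroup H] [InnerProductSpace ℝ H] {n : ℕ}
    (c : Fin n → Fin n → (H →L[ℝ] H)) :
    (PiLp 2 fun _ : Fin n => H) →L[ℝ] (PiLp 2 fun _ : Fin n => H) :=
  (((PiLp.continuousLinearEquiv 2 ℝ (fun _ : Fin n => H)).symm.toContinuousLinearMap.comp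
    (ContinuousLinearMap.pi fun i : Fin n =>
      ∑ k : Fin n, (c i k).comp (ContinuousLinearMap.proj k))).comp
    (PiLp.continuousLinearEquiv 2 ℝ (fun _ : Fin n => H)).toContinuousLinearMap)

/-- Evaluation of the homogeneous linear pencil `I_H x₀ + Σ_j A_j x_j` at a tuple of
`n × n` matrices: the operator on `H^n` with `(i,k)` block
`(X₀)_{ik} I_H + Σ_j (X_j)_{ik} A_j`. -/
def hEval [NormedAddCommGroup H] [InnerProductSpace ℝ H] {g n : ℕ}
    (A : Fin g → (H →L[ℝ] H)) (X0 : Matrix (Fin n) (Fin n) ℝ)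
    (X : Fin g → Matrix (Fin n) (Fin n) ℝ) :
    (PiLp 2 fun _ : Fin n => H) →L[ℝ] (PiLp 2 fun _ : Fin n => H) :=
  blockOp fun i k => X0 i k • (1 : H →L[ℝ] H) + ∑ j, X j i k • A j

/-- Evaluation of the monic linear pencil `I_H + Σ_j A_j x_j` at a tuple of
`n × n` matrices. -/
def monicEval [NormedAddCommGroup H] [InnerProductSpace ℝ H] {g n : ℕ}
    (A : Fin g → (H →L[ℝ] H)) (X : Fin g → Matrix (Fin n) (Fin n) ℝ) :
    (PiLp 2 fun _ : Fin n => H) →L[ℝ] (PiLp 2 fun _ : Fin n => H) :=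
  hEval A 1 X

/-- Positivity of the evaluation `L(X) = A₀ ⊗ I_K + Σ_j A_j ⊗ X_j` of a linear operator
pencil at a tuple of bounded operators on a Hilbert space `K`. -/
def operPencilPos [NormedAddCommGroup H] [InnerProductSpace ℝ H]
    [NormedAddCommGroup K] [InnerProductSpace ℝ K] {g : ℕ}
    (A0 : H →L[ℝ] H) (A : Fin g → (H →L[ℝ] H)) (X : Fin g → (K →L[ℝ] K)) : Prop :=
  ∀ (m : ℕ) (h : Fin m → H) (u : Fin m → K),
    0 ≤ ∑ i, ∑ l,
      (⟪A0 (h i), h l⟫ * ⟪u i, u l⟫ + ∑ j, ⟪A j (h i), h l⟫ * ⟪X j (u i), u l⟫)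

/-- A bundled separable real Hilbert space. -/
structure SepHilbert where
  carrier : Type
  [nacg : NormedAddCommGroup carrier]
  [ips : InnerProductSpace ℝ carrier]
  [cs : CompleteSpace carrier]
  [sep : TopologicalSpace.SeparableSpace carrier]

attribute [instance] SepHilbert.nacg SepHilbert.ips SepHilbert.cs SepHilbert.sep


/-- The operator `T ⊕ 0` on `H ⊕ ℝ` acting as `T` on `H` and as `0` on `ℝ`. -/
def dsumZero {H : Type} [NormedAddCommGroup H] [InnerProductSpace ℝ H]
    (T : H →L[ℝ] H) : WithLp 2 (H × ℝ) →L[ℝ] WithLp 2 (H × ℝ) :=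
  ((WithLp.prodContinuousLinearEquiv 2 ℝ H ℝ).symm.toContinuousLinearMap.comp
    (T.prodMap (0 : ℝ →L[ℝ] ℝ))).comp
    (WithLp.prodContinuousLinearEquiv 2 ℝ H ℝ).toContinuousLinearMap

section Aux
open Matrix

private lemma sumc {α M : Type*} [AddCommMonoid M] {s : Finset α} {f g : α → M}
    (h : ∀ a ∈ s, f a = g a) : s.sum f = s.sum g := Finset.sum_congr rfl h

private lemma sum_perm4 {M : Type*} [AddCommMonoid M] {a b c d : Type*}
    [Fintype a] [Fintype b] [Fintype c] [Fintype d] (f : a → b → c → d → M) :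
    ∑ i, ∑ k, ∑ m, ∑ l, f i k m l = ∑ m, ∑ l, ∑ i, ∑ k, f i k m l := by
  trans ∑ i, ∑ m, ∑ k, ∑ l, f i k m l
  · exact sumc fun i _ => Finset.sum_comm
  trans ∑ m, ∑ i, ∑ k, ∑ l, f i k m l
  · exact Finset.sum_comm
  trans ∑ m, ∑ i, ∑ l, ∑ k, f i k m l
  · exact sumc fun m _ => sumc fun i _ => Finset.sum_comm
  exact sumc fun m _ => Finset.sum_comm

private lemma sum_perm5 {M : Type*} [AddCommMonoid M] {a b c d e : Type*}
    [Fintype a] [Fintype b] [Fintype c] [Fintype d] [Fintype e]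
    (f : a → b → c → d → e → M) :
    ∑ i, ∑ k, ∑ j, ∑ m, ∑ l, f i k j m l = ∑ m, ∑ l, ∑ j, ∑ k, ∑ i, f i k j m l := by
  trans ∑ m, ∑ l, ∑ i, ∑ k, ∑ j, f i k j m l
  · trans ∑ i, ∑ k, ∑ m, ∑ l, ∑ j, f i k j m l
    · exact sumc fun i _ => sumc fun k _ =>
        Finset.sum_comm.trans (sumc fun m _ => Finset.sum_comm)
    · exact sum_perm4 _
  refine sumc fun m _ => sumc fun l _ => ?_
  trans ∑ j, ∑ i, ∑ k, f i k j m l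
  · exact (sumc fun i _ => Finset.sum_comm).trans Finset.sum_comm
  exact sumc fun j _ => Finset.sum_comm

variable [NormedAddCommGroup H] [InnerProductSpace ℝ H]

lemma blockOp_apply {n : ℕ}
    (c : Fin n → Fin n → (H →L[ℝ] H)) (v : PiLp 2 fun _ : Fin n => H) (i : Fin n) :
    blockOp c v i = ∑ k, c i k (v k) := by
  simp [blockOp]

lemma inner_blockOp {n : ℕ}
    (c : Fin n → Fin n → (H →L[ℝ] H)) (u v : PiLp 2 fun _ : Fin n => H) :
    ⟪blockOp c u, v⟫ = ∑ i, ∑ k, ⟪c i k (u k), v i⟫ := by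
  simp [PiLp.inner_apply, blockOp_apply, inner_sum, sum_inner]

lemma inner_hEval {g n : ℕ}
    (A : Fin g → (H →L[ℝ] H)) (X0 : Matrix (Fin n) (Fin n) ℝ)
    (X : Fin g → Matrix (Fin n) (Fin n) ℝ) (u v : PiLp 2 fun _ : Fin n => H) :
    ⟪hEval A X0 X u, v⟫ = ∑ i, ∑ k,
      (X0 i k * ⟪u k, v i⟫ + ∑ j, X j i k * ⟪A j (u k), v i⟫) := by
  rw [hEval, inner_blockOp]
  refine Finset.sum_congr rfl fun i _ => Finset.sum_congr rfl fun k _ => ?_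
  simp [inner_add_left, sum_inner, real_inner_smul_left]

/-- multiply a vector in `H^n` by a scalar matrix `S`. -/
def mapV {n : ℕ}
    (S : Matrix (Fin n) (Fin n) ℝ) (v : PiLp 2 fun _ : Fin n => H) :
    PiLp 2 fun _ : Fin n => H := WithLp.toLp 2 (fun i => ∑ k, S i k • v k)

lemma mapV_mapV {n : ℕ} (S T : Matrix (Fin n) (Fin n) ℝ)
    (v : PiLp 2 fun _ : Fin n => H) : mapV S (mapV T v) = mapV (S * T) v := by
  ext i
  simp only [mapV, PiLp.toLp_apply, Finset.smul_sum, Matrix.mul_apply, Finset.sum_smul, smul_smul]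
  exact Finset.sum_comm

lemma mapV_one {n : ℕ} (v : PiLp 2 fun _ : Fin n => H) : mapV 1 v = v := by
  ext i
  simp [mapV, Matrix.one_apply, ite_smul]

lemma inner_hEval_mapV {g n : ℕ}
    (A : Fin g → (H →L[ℝ] H)) (X0 : Matrix (Fin n) (Fin n) ℝ)
    (X : Fin g → Matrix (Fin n) (Fin n) ℝ) (S : Matrix (Fin n) (Fin n) ℝ)
    (u v : PiLp 2 fun _ : Fin n => H) :
    ⟪hEval A X0 X (mapV S u), mapV S v⟫
      = ⟪hEval A (Sᵀ * X0 * S) (fun j => Sᵀ * X j * S) u, v⟫ := by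
  rw [inner_hEval, inner_hEval]
  simp only [mapV, PiLp.toLp_apply, inner_sum, sum_inner, map_sum, real_inner_smul_left,
    _root_.map_smul, ContinuousLinearMap.coe_smul', Pi.smul_apply,
    real_inner_smul_right, Matrix.mul_apply, Matrix.transpose_apply,
    Finset.sum_mul, Finset.mul_sum]
  simp only [Finset.sum_add_distrib]
  congr 1
  · refine ((sum_perm4 fun i k m l => X0 i k * (S i m * (S k l * ⟪u l, v m⟫))).trans
      (sumc fun _ _ => sumc fun _ _ => Finset.sum_comm)).trans ?_
    exact sumc fun _ _ => sumc fun _ _ => sumc fun _ _ => sumc fun _ _ => by ring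
  · refine (sum_perm5 fun i k j m l =>
      X j i k * (S i m * (S k l * ⟪A j (u l), v m⟫))).trans ?_
    exact sumc fun _ _ => sumc fun _ _ => sumc fun _ _ => sumc fun _ _ =>
      sumc fun _ _ => by ring

lemma opIsSymm_hEval {g n : ℕ}
    (A : Fin g → (H →L[ℝ] H)) (X0 : Matrix (Fin n) (Fin n) ℝ)
    (X : Fin g → Matrix (Fin n) (Fin n) ℝ)
    (hA : ∀ j, OpIsSymm (A j)) (h0 : X0.IsSymm) (hX : ∀ j, (X j).IsSymm) :
    OpIsSymm (hEval A X0 X) := by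
  intro u v
  rw [show ⟪u, hEval A X0 X v⟫ = ⟪hEval A X0 X v, u⟫ from real_inner_comm _ _,
    inner_hEval, inner_hEval]
  rw [Finset.sum_comm]
  refine Finset.sum_congr rfl fun i _ => Finset.sum_congr rfl fun k _ => ?_
  have h0' : X0 k i = X0 i k := h0.apply i k
  have hX' : ∀ j, X j k i = X j i k := fun j => (hX j).apply i k
  simp only [h0', hX']
  congr 1
  · rw [real_inner_comm (v k) (u i)]
  · refine Finset.sum_congr rfl fun j _ => ?_
    rw [hA j (u i) (v k), real_inner_comm (u i) ((A j) (v k))]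

lemma inner_hEval_addSmulOne {g n : ℕ}
    (A : Fin g → (H →L[ℝ] H)) (X0 : Matrix (Fin n) (Fin n) ℝ)
    (X : Fin g → Matrix (Fin n) (Fin n) ℝ) (ε : ℝ) (v : PiLp 2 fun _ : Fin n => H) :
    ⟪hEval A (X0 + ε • 1) X v, v⟫ = ⟪hEval A X0 X v, v⟫ + ε * ∑ i, ⟪v i, v i⟫ := by
  rw [inner_hEval, inner_hEval]
  simp only [Matrix.add_apply, Matrix.smul_apply, Matrix.one_apply, smul_eq_mul,
    mul_ite, mul_one, mul_zero, ite_mul, zero_mul, add_mul,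
    Finset.sum_add_distrib, Finset.mul_sum]
  rw [add_right_comm]
  congr 1
  refine sumc fun i _ => ?_
  simp [Finset.sum_ite_eq, real_inner_comm]

end Aux

section Aux2
open Matrix

variable {H : Type} [NormedAddCommGroup H] [InnerProductSpace ℝ H]

lemma dsumZero_fst (T : H →L[ℝ] H) (x : WithLp 2 (H × ℝ)) : (dsumZero T x).fst = T x.fst := rfl

lemma dsumZero_snd (T : H →L[ℝ] H) (x : WithLp 2 (H × ℝ)) : (dsumZero T x).snd = 0 := rfl

lemma inner_dsumZero (T : H →L[ℝ] H) (x y : WithLp 2 (H × ℝ)) :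
    ⟪dsumZero T x, y⟫ = ⟪T x.fst, y.fst⟫ := by
  simp [dsumZero, WithLp.prod_inner_apply]

lemma opIsSymm_dsumZero (T : H →L[ℝ] H) (hT : OpIsSymm T) : OpIsSymm (dsumZero T) := by
  intro x y
  calc ⟪dsumZero T x, y⟫ = ⟪T x.fst, y.fst⟫ := inner_dsumZero T x y
    _ = ⟪x.fst, T y.fst⟫ := hT _ _
    _ = ⟪T y.fst, x.fst⟫ := real_inner_comm _ _
    _ = ⟪dsumZero T y, x⟫ := (inner_dsumZero T y x).symm
    _ = ⟪x, dsumZero T y⟫ := real_inner_comm _ _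

lemma inner_hEval_dsum {g n : ℕ} (A : Fin g → (H →L[ℝ] H))
    (X0 : Matrix (Fin n) (Fin n) ℝ) (X : Fin g → Matrix (Fin n) (Fin n) ℝ)
    (w : PiLp 2 fun _ : Fin n => WithLp 2 (H × ℝ)) :
    ⟪hEval (fun j => dsumZero (A j)) X0 X w, w⟫
      = ⟪hEval A X0 X (WithLp.toLp 2 (fun i => (w i).fst)),
          (WithLp.toLp 2 (fun i => (w i).fst) : PiLp 2 fun _ : Fin n => H)⟫
        + ∑ i, ∑ k, X0 i k * ((w k).snd * (w i).snd) := by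
  rw [inner_hEval, inner_hEval]
  simp only [inner_dsumZero, WithLp.prod_inner_apply, WithLp.ofLp_fst, WithLp.ofLp_snd,
    Finset.sum_add_distrib, mul_add]
  rw [add_right_comm]
  simp only [dsumZero_fst, dsumZero_snd, inner_zero_left, mul_zero,
    Finset.sum_const_zero, add_zero]
  simp [RCLike.inner_apply, PiLp.toLp_apply, mul_comm]
end Aux2

/-- `D_{L₁}(n) ⊆ D_{L₂}(n)` iff `D_{ʰL̃₁}(n) ⊆ D_{ʰL₂}(n)` for the extended
pencil `L̃₁` on `H₁ ⊕ ℝ` with coefficients `A_j ⊕ 0`. -/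
theorem inclusion_iff_extended_homogeneous_inclusion
    {g : ℕ} {H1 H2 : Type}
    [NormedAddCommGroup H1] [InnerProductSpace ℝ H1] [CompleteSpace H1]
    [TopologicalSpace.SeparableSpace H1]
    [NormedAddCommGroup H2] [InnerProductSpace ℝ H2] [CompleteSpace H2]
    [TopologicalSpace.SeparableSpace H2]
    (A : Fin g → (H1 →L[ℝ] H1)) (B : Fin g → (H2 →L[ℝ] H2))
    (hA : ∀ j, OpIsSymm (A j)) (hB : ∀ j, OpIsSymm (B j))
    (n : ℕ) :
    (∀ X : Fin g → Matrix (Fin n) (Fin n) ℝ, (∀ j, (X j).IsSymm) →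
        OpIsPos (monicEval A X) → OpIsPos (monicEval B X)) ↔
    (∀ (X0 : Matrix (Fin n) (Fin n) ℝ) (X : Fin g → Matrix (Fin n) (Fin n) ℝ),
        X0.IsSymm → (∀ j, (X j).IsSymm) →
        OpIsPos (hEval (fun j => dsumZero (A j)) X0 X) → OpIsPos (hEval B X0 X)) := by
  constructor
  · -- monic inclusion → homogeneous inclusion
    intro hmono X0 X hX0 hX hpos
    have hbase : ∀ w : PiLp 2 fun _ : Fin n => H1, 0 ≤ ⟪hEval A X0 X w, w⟫ := by
      intro w
      have h := hpos.2 (WithLp.toLp 2 (fun i => (WithLp.equiv 2 (H1 × ℝ)).symm (w i, 0)) :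
        PiLp 2 fun _ : Fin n => WithLp 2 (H1 × ℝ))
      rw [inner_hEval_dsum] at h
      simpa using h
    have hX0psd : X0.PosSemidef := by
      refine Matrix.PosSemidef.of_dotProduct_mulVec_nonneg ?_ ?_
      · rw [Matrix.IsHermitian, Matrix.conjTranspose_eq_transpose_of_trivial]
        exact hX0
      · intro x
        have h := hpos.2 (WithLp.toLp 2 (fun i => (WithLp.equiv 2 (H1 × ℝ)).symm (0, x i)) :
          PiLp 2 fun _ : Fin n => WithLp 2 (H1 × ℝ))
        rw [inner_hEval_dsum] at h
        simp only [PiLp.toLp_apply, WithLp.equiv_symm_apply, WithLp.toLp_fst, WithLp.toLp_snd] at h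
        have h0 : ⟪hEval A X0 X (WithLp.toLp 2 (fun _ => (0 : H1))),
            (WithLp.toLp 2 (fun _ => (0 : H1)) : PiLp 2 fun _ : Fin n => H1)⟫ = 0 := by
          have : (WithLp.toLp 2 (fun _ => (0 : H1)) : PiLp 2 fun _ : Fin n => H1) = 0 := rfl
          rw [this, inner_zero_right]
        rw [h0, zero_add] at h
        calc (0:ℝ) ≤ ∑ i, ∑ k, X0 i k * (x k * x i) := h
          _ = dotProduct (star x) (X0.mulVec x) := by
            simp only [star_trivial, dotProduct, Matrix.mulVec, Finset.mul_sum]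
            exact sumc fun i _ => sumc fun k _ => by ring
    refine ⟨opIsSymm_hEval B X0 X hB hX0 hX, fun v => ?_⟩
    have hnn : (0:ℝ) ≤ ∑ i, ⟪v i, v i⟫ :=
      Finset.sum_nonneg fun i _ => real_inner_self_nonneg
    have key : ∀ ε : ℝ, 0 < ε → 0 ≤ ⟪hEval B X0 X v, v⟫ + ε * ∑ i, ⟪v i, v i⟫ := by
      intro ε hε
      rw [← inner_hEval_addSmulOne]
      have hεpd : (ε • (1 : Matrix (Fin n) (Fin n) ℝ)).PosDef := by
        refine Matrix.PosDef.of_dotProduct_mulVec_pos ?_ ?_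
        · rw [Matrix.IsHermitian, Matrix.conjTranspose_smul, Matrix.conjTranspose_one,
            star_trivial]
        · intro x hx
          have hxx : 0 < dotProduct (star x) x :=
            Matrix.dotProduct_star_self_pos_iff.2 hx
          rw [Matrix.smul_mulVec, Matrix.one_mulVec, dotProduct_smul]
          exact smul_pos hε hxx
      have hP : (X0 + ε • (1 : Matrix (Fin n) (Fin n) ℝ)).PosDef :=
        Matrix.PosDef.posSemidef_add hX0psd hεpd
      set P := X0 + ε • (1 : Matrix (Fin n) (Fin n) ℝ) with hPdef
      obtain ⟨S, hSsq, hSt⟩ : ∃ S : Matrix (Fin n) (Fin n) ℝ, S * S = P ∧ Matrix.transpose S = S := by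
        open scoped MatrixOrder in
        refine ⟨CFC.sqrt P, CFC.sqrt_mul_sqrt_self P hP.posSemidef.nonneg, ?_⟩
        rw [← Matrix.conjTranspose_eq_transpose_of_trivial]
        open scoped MatrixOrder in
        exact (Matrix.nonneg_iff_posSemidef.1 (CFC.sqrt_nonneg P)).1
      have hdet : IsUnit S.det := by
        have hp := hP.det_pos
        rw [← hSsq, Matrix.det_mul] at hp
        exact isUnit_iff_ne_zero.2 fun h => by simp [h] at hp
      have hSS' : S * S⁻¹ = 1 := Matrix.mul_nonsing_inv S hdet
      have hS'S : S⁻¹ * S = 1 := Matrix.nonsing_inv_mul S hdet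
      have hSit : Matrix.transpose S⁻¹ = S⁻¹ := by rw [Matrix.transpose_nonsing_inv, hSt]
      set Y := fun j => S⁻¹ * X j * S⁻¹ with hYdef
      have hYsymm : ∀ j, (Y j).IsSymm := by
        intro j
        have hxe : Matrix.transpose (X j) = X j := hX j
        show Matrix.transpose (Y j) = Y j
        rw [hYdef]
        rw [Matrix.transpose_mul, Matrix.transpose_mul, hSit, hxe, ← mul_assoc]
      have hT3 : Matrix.transpose S * 1 * S = P := by rw [hSt, mul_one, hSsq]
      have hT4 : (fun j => Matrix.transpose S * Y j * S) = X := by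
        funext j
        rw [hSt, hYdef]
        simp only [mul_assoc]
        rw [hS'S, mul_one, ← mul_assoc, hSS', one_mul]
      have hAY : OpIsPos (monicEval A Y) := by
        refine ⟨opIsSymm_hEval A 1 Y hA Matrix.isSymm_one hYsymm, fun u => ?_⟩
        have hu : u = mapV S (mapV S⁻¹ u) := by rw [mapV_mapV, hSS', mapV_one]
        rw [monicEval, hu, inner_hEval_mapV, hT3, hT4, hPdef, inner_hEval_addSmulOne]
        have := hbase (mapV S⁻¹ u)
        have h2 : (0:ℝ) ≤ ε * ∑ i, ⟪mapV S⁻¹ u i, mapV S⁻¹ u i⟫ :=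
          mul_nonneg hε.le (Finset.sum_nonneg fun i _ => real_inner_self_nonneg)
        linarith
      have hBY := hmono Y hYsymm hAY
      have h := hBY.2 (mapV S v)
      rw [monicEval, inner_hEval_mapV, hT3, hT4] at h
      exact h
    by_contra hc
    push_neg at hc
    set c := ⟪hEval B X0 X v, v⟫ with hcdef
    set d := ∑ i, ⟪v i, v i⟫ with hddef
    have hd1 : (0:ℝ) < d + 1 := by linarith
    have hε : 0 < -c / (2 * (d + 1)) := div_pos (by linarith) (by linarith)
    have h := key _ hε
    have hne : (2 * (d + 1)) ≠ 0 := by linarith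
    have heq : (c + -c / (2 * (d + 1)) * d) * (2 * (d + 1)) = c * (d + 2) := by
      field_simp
      ring
    have h3 : (0:ℝ) ≤ c * (d + 2) := heq ▸ mul_nonneg h (by linarith)
    nlinarith
  · -- homogeneous inclusion → monic inclusion
    intro hhom X hX hposA
    have h := hhom 1 X Matrix.isSymm_one hX ?_
    · exact h
    refine ⟨opIsSymm_hEval _ 1 X (fun j => opIsSymm_dsumZero (A j) (hA j))
      Matrix.isSymm_one hX, fun w => ?_⟩
    rw [inner_hEval_dsum]
    refine add_nonneg (hposA.2 _) ?_
    have : ∀ i : Fin n, ∀ k : Fin n,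
        (1 : Matrix (Fin n) (Fin n) ℝ) i k * ((w k).snd * (w i).snd)
          = if i = k then (w k).snd * (w i).snd else 0 := by
      intro i k; simp [Matrix.one_apply]
    refine Finset.sum_nonneg fun i _ => ?_
    rw [sumc fun k _ => this i k, Finset.sum_ite_eq Finset.univ i
      (fun k => (w k).snd * (w i).snd)]
    simp [mul_self_nonneg]
end
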